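/- For every b > 0, every t > 0 and all x, x' ∈ ℝ³, one has e^{bt} · |M_b(t,x,x')| ≤ (4πt)^{−3/2} · (1 + 2bt) · exp(−|x−x'|²/(4t)). (Multiplying both sides by e^{−tm²}, this is the estimate for the heat kernel of E_A² = (p−eA)² − eσ·B + m², whose kernel has modulus at most e^{−tm²} e^{bt} |M_b(t,x,x')|.) -/

import Mathlib

open Real MeasureTheory

/-- The hyperbolic cotangent `coth z = cosh z / sinh z`. -/
noncomputable def coth (z : ℝ) : ℝ := Real.cosh z / Real.sinh z

/-- The Mehler heat kernel `M_b(t,x,x')` of the magnetic Schrödinger operator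
`H_s = (p - eA)²` with `A(x) = (b/2)(-x₂, x₁, 0)` for a constant magnetic field
of strength `b`. -/
noncomputable def mehlerKernel (b t : ℝ) (x x' : EuclideanSpace ℝ (Fin 3)) : ℂ :=
  (((4 * π * t) ^ (-(1 : ℝ) / 2) * (b / (4 * π * Real.sinh (b * t))) : ℝ) : ℂ) *
    Complex.exp (-Complex.I * ((b / 2 * (x 0 * x' 1 - x 1 * x' 0) : ℝ) : ℂ)) *
    ((Real.exp (-(x 2 - x' 2) ^ 2 / (4 * t)) : ℝ) : ℂ) *
    ((Real.exp (-(b / 4) * coth (b * t) * ((x 0 - x' 0) ^ 2 + (x 1 - x' 1) ^ 2)) : ℝ) : ℂ)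

lemma sinh_le_mul_cosh' {x : ℝ} (hx : 0 ≤ x) : Real.sinh x ≤ x * Real.cosh x := by
  have h : ∀ y : ℝ, HasDerivAt (fun y => y * Real.cosh y - Real.sinh y)
      (1 * Real.cosh y + y * Real.sinh y - Real.cosh y) y := fun y =>
    (((hasDerivAt_id y).mul (Real.hasDerivAt_cosh y)).sub (Real.hasDerivAt_sinh y))
  have mono : MonotoneOn (fun y => y * Real.cosh y - Real.sinh y) (Set.Ici 0) := by
    apply monotoneOn_of_deriv_nonneg (convex_Ici 0)
    · exact (Continuous.sub (continuous_id.mul Real.continuous_cosh)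
        Real.continuous_sinh).continuousOn
    · intro y _
      exact (h y).differentiableAt.differentiableWithinAt
    · intro y hy
      rw [interior_Ici] at hy
      rw [(h y).deriv]
      have := (Real.sinh_nonneg_iff.2 hy.le)
      nlinarith [(Set.mem_Ioi.mp hy).le]
  have := mono (Set.self_mem_Ici) hx hx
  simp at this
  linarith

lemma key_scalar' {s : ℝ} (hs : 0 < s) : Real.exp s * s ≤ (1 + 2 * s) * Real.sinh s := by
  have h1 : 2 * s + 1 ≤ Real.exp (2 * s) := Real.add_one_le_exp _
  have h2 : Real.exp (2 * s) = Real.exp s * Real.exp s := by rw [← Real.exp_add]; ring_nf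
  have h3 : Real.exp s * Real.exp (-s) = 1 := by rw [← Real.exp_add]; simp
  rw [Real.sinh_eq]
  have hes : 0 < Real.exp s := Real.exp_pos s
  nlinarith [Real.exp_pos (-s)]

/-- For every `b > 0`, every `t > 0` and all `x, x' ∈ ℝ³`,
`e^{bt} |M_b(t,x,x')| ≤ (4πt)^{-3/2} (1 + 2bt) exp(-|x-x'|²/(4t))`.
(Multiplying both sides by `e^{-tm²}`, this is the estimate for the heat kernel of
`E_A² = (p-eA)² - eσ·B + m²`, whose kernel has modulus at most
`e^{-tm²} e^{bt} |M_b(t,x,x')|`.) -/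
theorem exp_mul_mehlerKernel_le (b : ℝ) (hb : 0 < b) (t : ℝ) (ht : 0 < t)
    (x x' : EuclideanSpace ℝ (Fin 3)) :
    Real.exp (b * t) * ‖mehlerKernel b t x x'‖ ≤
      (4 * π * t) ^ (-(3 : ℝ) / 2) * (1 + 2 * b * t) *
        Real.exp (-‖x - x'‖ ^ 2 / (4 * t)) := by
  have hpi : (0:ℝ) < π := Real.pi_pos
  have hbt : (0:ℝ) < b * t := by positivity
  have hsinh : 0 < Real.sinh (b * t) := Real.sinh_pos_iff.2 hbt
  have hpre : 0 < (4 * π * t) ^ (-(1 : ℝ) / 2) * (b / (4 * π * Real.sinh (b * t))) := by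
    positivity
  -- norm of the kernel
  have hnorm : ‖mehlerKernel b t x x'‖ =
      (4 * π * t) ^ (-(1 : ℝ) / 2) * (b / (4 * π * Real.sinh (b * t))) *
      Real.exp (-(x 2 - x' 2) ^ 2 / (4 * t)) *
      Real.exp (-(b / 4) * coth (b * t) * ((x 0 - x' 0) ^ 2 + (x 1 - x' 1) ^ 2)) := by
    have hexp : ‖Complex.exp (-Complex.I * ((b / 2 * (x 0 * x' 1 - x 1 * x' 0) : ℝ) : ℂ))‖ = 1 := by
      rw [Complex.norm_exp]
      simp
    rw [mehlerKernel, norm_mul, norm_mul, norm_mul, hexp, Complex.norm_real, Complex.norm_real,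
      Complex.norm_real, Real.norm_eq_abs, Real.norm_eq_abs, Real.norm_eq_abs,
      abs_of_pos hpre, abs_of_pos (Real.exp_pos _), abs_of_pos (Real.exp_pos _)]
    ring
  -- norm of the difference
  have hsq : ‖x - x'‖ ^ 2 = (x 0 - x' 0) ^ 2 + (x 1 - x' 1) ^ 2 + (x 2 - x' 2) ^ 2 := by
    rw [EuclideanSpace.norm_eq, Real.sq_sqrt (by positivity)]
    simp [Fin.sum_univ_three, sq_abs]
  set r2 : ℝ := (x 0 - x' 0) ^ 2 + (x 1 - x' 1) ^ 2 with hr2def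
  set z2 : ℝ := (x 2 - x' 2) ^ 2 with hz2def
  have hr2 : (0:ℝ) ≤ r2 := by positivity
  have hsplit : -‖x - x'‖ ^ 2 / (4 * t) = -z2 / (4 * t) + -r2 / (4 * t) := by
    rw [hsq]; field_simp; ring
  rw [hnorm, hsplit, Real.exp_add]
  -- prefactor bound
  have hfac : Real.exp (b * t) * ((4 * π * t) ^ (-(1 : ℝ) / 2) *
      (b / (4 * π * Real.sinh (b * t)))) ≤ (4 * π * t) ^ (-(3 : ℝ) / 2) * (1 + 2 * b * t) := by
    have hpow : (4 * π * t) ^ (-(3 : ℝ) / 2)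
        = (4 * π * t) ^ (-(1 : ℝ) / 2) * (4 * π * t)⁻¹ := by
      rw [← Real.rpow_neg_one (4 * π * t), ← Real.rpow_add (by positivity)]
      norm_num
    have hA : (0:ℝ) < (4 * π * t) ^ (-(1 : ℝ) / 2) := by positivity
    have key := key_scalar' hbt
    have inner : Real.exp (b * t) * (b / (4 * π * Real.sinh (b * t)))
        ≤ (4 * π * t)⁻¹ * (1 + 2 * b * t) := by
      rw [mul_div_assoc' (Real.exp (b * t)), inv_mul_eq_div,
        div_le_div_iff₀ (by positivity) (by positivity)]
      nlinarith [key, hpi, hsinh]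
    calc Real.exp (b * t) * ((4 * π * t) ^ (-(1 : ℝ) / 2) * (b / (4 * π * Real.sinh (b * t))))
        = (4 * π * t) ^ (-(1 : ℝ) / 2) *
          (Real.exp (b * t) * (b / (4 * π * Real.sinh (b * t)))) := by ring
      _ ≤ (4 * π * t) ^ (-(1 : ℝ) / 2) * ((4 * π * t)⁻¹ * (1 + 2 * b * t)) :=
          mul_le_mul_of_nonneg_left inner hA.le
      _ = (4 * π * t) ^ (-(3 : ℝ) / 2) * (1 + 2 * b * t) := by rw [hpow]; ring
  -- Gaussian bound on the transverse factor
  have hEr : Real.exp (-(b / 4) * coth (b * t) * r2) ≤ Real.exp (-r2 / (4 * t)) := by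
    apply Real.exp_le_exp.2
    have hcoth : 1 ≤ coth (b * t) * (b * t) := by
      rw [coth, div_mul_eq_mul_div, le_div_iff₀ hsinh, one_mul]
      have := sinh_le_mul_cosh' hbt.le
      nlinarith
    have h2 : r2 * 1 ≤ r2 * (coth (b * t) * (b * t)) := mul_le_mul_of_nonneg_left hcoth hr2
    rw [neg_div, neg_mul, neg_mul, neg_le_neg_iff, div_le_iff₀ (by positivity)]
    nlinarith
  calc Real.exp (b * t) *
      ((4 * π * t) ^ (-(1 : ℝ) / 2) * (b / (4 * π * Real.sinh (b * t))) *
        Real.exp (-z2 / (4 * t)) * Real.exp (-(b / 4) * coth (b * t) * r2))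
      = (Real.exp (b * t) * ((4 * π * t) ^ (-(1 : ℝ) / 2) * (b / (4 * π * Real.sinh (b * t))))) *
        Real.exp (-z2 / (4 * t)) * Real.exp (-(b / 4) * coth (b * t) * r2) := by ring
    _ ≤ ((4 * π * t) ^ (-(3 : ℝ) / 2) * (1 + 2 * b * t)) *
        Real.exp (-z2 / (4 * t)) * Real.exp (-r2 / (4 * t)) := by
        exact mul_le_mul (mul_le_mul hfac le_rfl (Real.exp_pos _).le (by positivity))
          hEr (Real.exp_pos _).le (by positivity)
    _ = (4 * π * t) ^ (-(3 : ℝ) / 2) * (1 + 2 * b * t) *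
        (Real.exp (-z2 / (4 * t)) * Real.exp (-r2 / (4 * t))) := by ring
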